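/- Let G be a group, M a commutative monoid, φ a filter on G, and s, t, u ∈ M all nonzero. Then for all x ∈ φ_s, y ∈ φ_t, z ∈ φ_u, the product [[x,y],z] · [[y,z],x] · [[z,x],y] lies in φ_{s+t+u}⁺. (This is the graded Jacobi identity underlying the fact that the associated graded object L(φ) of a filter is an M-graded Lie ring.) -/

import Mathlib

/-- `φ_s⁺`, the subgroup generated by all `φ (s + t)` with `t ≠ 0`. -/
def filterPlus {M : Type*} [AddCommMonoid M] {G : Type*} [Group G]
    (φ : M → Subgroup G) (s : M) : Subgroup G :=
  ⨆ t ∈ {t : M | t ≠ 0}, φ (s + t)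

/-- A filter on `G` over the commutative monoid `M`. -/
def IsFilter {M : Type*} [AddCommMonoid M] {G : Type*} [Group G]
    (φ : M → Subgroup G) : Prop :=
  φ 0 = ⊤ ∧ ∀ s t : M, ⁅φ s, φ t⁆ ≤ φ (s + t) ∧ φ (s + t) ≤ φ s ⊓ φ t

/-- The commutator `[x,y] = x⁻¹y⁻¹xy` (the convention used in the paper). -/
def pcomm {G : Type*} [Group G] (x y : G) : G := x⁻¹ * y⁻¹ * x * y

namespace S3Aux

lemma commute_of_pcomm {Q : Type*} [Group Q] {a b : Q} (h : pcomm a b = 1) : Commute a b := by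
  have := congrArg (fun g => b * (a * g)) h
  exact (show a * b = b * a by simpa [pcomm, mul_assoc] using this)

lemma stepA {Q : Type*} [Group Q] (X Y Z : Q)
    (a1 : pcomm (pcomm (pcomm X Y)⁻¹ Y⁻¹) Z = 1)
    (a2 : pcomm (pcomm (pcomm X Y)⁻¹ Z) (pcomm (pcomm X Y)⁻¹ Y⁻¹) = 1)
    (a3 : pcomm (pcomm (pcomm X Y) Z)⁻¹ (pcomm X Y)⁻¹ = 1) :
    pcomm (pcomm X Y⁻¹) Z = (pcomm (pcomm X Y) Z)⁻¹ := by
  have e1 : pcomm (pcomm X Y⁻¹) Z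
      = (pcomm (pcomm X Y)⁻¹ Y⁻¹)⁻¹ * (pcomm (pcomm X Y)⁻¹ Z) * (pcomm (pcomm X Y)⁻¹ Y⁻¹)
        * pcomm (pcomm (pcomm X Y)⁻¹ Y⁻¹) Z := by
    simp only [pcomm]; group
  have e2 : pcomm (pcomm X Y)⁻¹ Z
      = (pcomm (pcomm X Y) Z)⁻¹ * pcomm (pcomm (pcomm X Y) Z)⁻¹ (pcomm X Y)⁻¹ := by
    simp only [pcomm]; group
  rw [e2, a3, mul_one] at e1 a2
  have hc := (commute_of_pcomm a2).eq
  rw [e1, a1, mul_one, mul_assoc, hc, ← mul_assoc, inv_mul_cancel, one_mul]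

/-- The graded Jacobi identity, abstractly in a quotient group where all the
higher-degree correction commutators have become trivial. -/
lemma jacobi_aux {Q : Type*} [Group Q] (X Y Z : Q)
    (a1 : pcomm (pcomm (pcomm X Y)⁻¹ Y⁻¹) Z = 1)
    (a2 : pcomm (pcomm (pcomm X Y)⁻¹ Z) (pcomm (pcomm X Y)⁻¹ Y⁻¹) = 1)
    (a3 : pcomm (pcomm (pcomm X Y) Z)⁻¹ (pcomm X Y)⁻¹ = 1)
    (a4 : pcomm (pcomm (pcomm X Y) Z) Y = 1)
    (b1 : pcomm (pcomm (pcomm Y Z)⁻¹ Z⁻¹) X = 1)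
    (b2 : pcomm (pcomm (pcomm Y Z)⁻¹ X) (pcomm (pcomm Y Z)⁻¹ Z⁻¹) = 1)
    (b3 : pcomm (pcomm (pcomm Y Z) X)⁻¹ (pcomm Y Z)⁻¹ = 1)
    (b4 : pcomm (pcomm (pcomm Y Z) X) Z = 1)
    (c1 : pcomm (pcomm (pcomm Z X)⁻¹ X⁻¹) Y = 1)
    (c2 : pcomm (pcomm (pcomm Z X)⁻¹ Y) (pcomm (pcomm Z X)⁻¹ X⁻¹) = 1)
    (c3 : pcomm (pcomm (pcomm Z X) Y)⁻¹ (pcomm Z X)⁻¹ = 1)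
    (c4 : pcomm (pcomm (pcomm Z X) Y) X = 1)
    (p12 : pcomm (pcomm (pcomm X Y) Z) (pcomm (pcomm Y Z) X) = 1)
    (p13 : pcomm (pcomm (pcomm X Y) Z) (pcomm (pcomm Z X) Y) = 1)
    (p23 : pcomm (pcomm (pcomm Y Z) X) (pcomm (pcomm Z X) Y) = 1) :
    pcomm (pcomm X Y) Z * pcomm (pcomm Y Z) X * pcomm (pcomm Z X) Y = 1 := by
  set h1 := pcomm (pcomm X Y) Z with hh1
  set h2 := pcomm (pcomm Y Z) X with hh2
  set h3 := pcomm (pcomm Z X) Y with hh3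
  have hw : (Y⁻¹ * pcomm (pcomm X Y⁻¹) Z * Y) * (Z⁻¹ * pcomm (pcomm Y Z⁻¹) X * Z)
      * (X⁻¹ * pcomm (pcomm Z X⁻¹) Y * X) = 1 := by
    simp only [pcomm]; group
  rw [stepA X Y Z a1 a2 a3, stepA Y Z X b1 b2 b3, stepA Z X Y c1 c2 c3] at hw
  have e1 : Y⁻¹ * h1⁻¹ * Y = h1⁻¹ := by
    rw [mul_assoc, ((commute_of_pcomm a4).inv_left).eq, ← mul_assoc, inv_mul_cancel, one_mul]
  have e2 : Z⁻¹ * h2⁻¹ * Z = h2⁻¹ := by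
    rw [mul_assoc, ((commute_of_pcomm b4).inv_left).eq, ← mul_assoc, inv_mul_cancel, one_mul]
  have e3 : X⁻¹ * h3⁻¹ * X = h3⁻¹ := by
    rw [mul_assoc, ((commute_of_pcomm c4).inv_left).eq, ← mul_assoc, inv_mul_cancel, one_mul]
  rw [e1, e2, e3] at hw
  have hrev : h3 * h2 * h1 = 1 := by
    have := congrArg (fun g => g⁻¹) hw
    simpa [mul_inv_rev, mul_assoc] using this
  have c12 := (commute_of_pcomm p12).eq
  have c13 := (commute_of_pcomm p13).eq
  have c23 := (commute_of_pcomm p23).eq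
  calc h1 * h2 * h3 = h1 * (h2 * h3) := by rw [mul_assoc]
    _ = h1 * (h3 * h2) := by rw [c23]
    _ = h1 * h3 * h2 := by rw [mul_assoc]
    _ = h3 * h1 * h2 := by rw [c13]
    _ = h3 * (h1 * h2) := by rw [mul_assoc]
    _ = h3 * (h2 * h1) := by rw [c12]
    _ = 1 := by rw [← mul_assoc]; exact hrev

section filters
variable {G : Type*} [Group G] {M : Type*} [AddCommMonoid M]
    (φ : M → Subgroup G) (hφ : IsFilter φ)
include hφ

lemma hpc_lem (a b : M) (g k : G) (hg : g ∈ φ a) (hk : k ∈ φ b) :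
    pcomm g k ∈ φ (a + b) := by
  have h := Subgroup.commutator_mem_commutator (inv_mem hg) (inv_mem hk)
  have h2 := (hφ.2 a b).1 h
  simpa [pcomm, commutatorElement_def, mul_assoc] using h2

open scoped commutatorElement in
lemma normal_each (w : M) : (φ w).Normal := by
  constructor
  intro n hn g
  have hc : ⁅n⁻¹, g⁆ ∈ φ w := by
    have h := Subgroup.commutator_mem_commutator (inv_mem hn)
      (show g ∈ φ 0 by rw [hφ.1]; trivial)
    simpa using (hφ.2 w 0).1 h
  have : g * n * g⁻¹ = n * ⁅n⁻¹, g⁆ := by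
    simp only [commutatorElement_def]; group
  rw [this]; exact mul_mem hn hc

omit hφ in
lemma Nle (s : M) (v : M) (hv : v ≠ 0) : φ (s + v) ≤ filterPlus φ s := by
  simp only [filterPlus]
  exact le_iSup₂ (f := fun (v : M) (_ : v ∈ {t : M | t ≠ 0}) => φ (s + v)) v hv

lemma key_lem (s : M) (v r w : M) (hv : v ≠ 0) (hw : w = s + v + r) :
    φ w ≤ filterPlus φ s := by
  rw [hw]
  exact le_trans (le_trans (hφ.2 (s+v) r).2 inf_le_left) (Nle φ s v hv)

lemma normal_plus (s : M) : (filterPlus φ s).Normal := by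
  constructor
  intro n hn g
  rw [filterPlus] at hn
  refine Subgroup.iSup_induction _ (C := fun x => g * x * g⁻¹ ∈ filterPlus φ s) hn ?_ ?_ ?_
  · intro v x hx
    by_cases hv : v ∈ {t : M | t ≠ 0}
    · rw [iSup_pos hv] at hx
      exact Nle φ s v hv ((normal_each φ hφ (s + v)).conj_mem x hx g)
    · rw [iSup_neg hv] at hx
      rw [Subgroup.mem_bot] at hx
      rw [hx]; simpa using one_mem (filterPlus φ s)
  · simpa using one_mem (filterPlus φ s)
  · intro a b ha hb
    have : g * (a * b) * g⁻¹ = (g * a * g⁻¹) * (g * b * g⁻¹) := by group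
    rw [this]; exact mul_mem ha hb

end filters
end S3Aux

open S3Aux in
/-- The graded Jacobi identity: `[[x,y],z]·[[y,z],x]·[[z,x],y] ∈ φ_{s+t+u}⁺`. -/
theorem statement3 {G : Type*} [Group G] {M : Type*} [AddCommMonoid M]
    (φ : M → Subgroup G) (hφ : IsFilter φ) (s t u : M)
    (hs : s ≠ 0) (ht : t ≠ 0) (hu : u ≠ 0)
    (x y z : G) (hx : x ∈ φ s) (hy : y ∈ φ t) (hz : z ∈ φ u) :
    pcomm (pcomm x y) z * pcomm (pcomm y z) x * pcomm (pcomm z x) y ∈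
      filterPlus φ (s + t + u) := by
  haveI : (filterPlus φ (s + t + u)).Normal := normal_plus φ hφ (s + t + u)
  set N := filterPlus φ (s + t + u) with hN
  let p : G →* G ⧸ N := QuotientGroup.mk' N
  have hp : ∀ a b : G, p (pcomm a b) = pcomm (p a) (p b) := by
    intro a b; simp [pcomm, map_mul, map_inv]
  have to_one : ∀ g : G, g ∈ N → p g = 1 := fun g hg => (QuotientGroup.eq_one_iff g).mpr hg
  -- basic commutator memberships
  have hxy : pcomm x y ∈ φ (s + t) := hpc_lem φ hφ s t x y hx hy
  have hyz : pcomm y z ∈ φ (t + u) := hpc_lem φ hφ t u y z hy hz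
  have hzx : pcomm z x ∈ φ (u + s) := hpc_lem φ hφ u s z x hz hx
  have h1m : pcomm (pcomm x y) z ∈ φ (s + t + u) := hpc_lem φ hφ (s+t) u _ z hxy hz
  have h2m : pcomm (pcomm y z) x ∈ φ (t + u + s) := hpc_lem φ hφ (t+u) s _ x hyz hx
  have h3m : pcomm (pcomm z x) y ∈ φ (u + s + t) := hpc_lem φ hφ (u+s) t _ y hzx hy
  -- the fifteen higher-degree memberships
  have a1m : pcomm (pcomm (pcomm x y)⁻¹ y⁻¹) z ∈ N :=
    key_lem φ hφ _ t 0 _ ht (by abel)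
      (hpc_lem φ hφ (s+t+t) u _ z
        (hpc_lem φ hφ (s+t) t _ y⁻¹ (inv_mem hxy) (inv_mem hy)) hz)
  have a2m : pcomm (pcomm (pcomm x y)⁻¹ z) (pcomm (pcomm x y)⁻¹ y⁻¹) ∈ N :=
    key_lem φ hφ _ s (t+t) _ hs (by abel)
      (hpc_lem φ hφ (s+t+u) (s+t+t) _ _
        (hpc_lem φ hφ (s+t) u _ z (inv_mem hxy) hz)
        (hpc_lem φ hφ (s+t) t _ y⁻¹ (inv_mem hxy) (inv_mem hy)))
  have a3m : pcomm (pcomm (pcomm x y) z)⁻¹ (pcomm x y)⁻¹ ∈ N :=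
    key_lem φ hφ _ s t _ hs (by abel)
      (hpc_lem φ hφ (s+t+u) (s+t) _ _ (inv_mem h1m) (inv_mem hxy))
  have a4m : pcomm (pcomm (pcomm x y) z) y ∈ N :=
    key_lem φ hφ _ t 0 _ ht (by abel) (hpc_lem φ hφ (s+t+u) t _ y h1m hy)
  have b1m : pcomm (pcomm (pcomm y z)⁻¹ z⁻¹) x ∈ N :=
    key_lem φ hφ _ u 0 _ hu (by abel)
      (hpc_lem φ hφ (t+u+u) s _ x
        (hpc_lem φ hφ (t+u) u _ z⁻¹ (inv_mem hyz) (inv_mem hz)) hx)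
  have b2m : pcomm (pcomm (pcomm y z)⁻¹ x) (pcomm (pcomm y z)⁻¹ z⁻¹) ∈ N :=
    key_lem φ hφ _ u (t+u) _ hu (by abel)
      (hpc_lem φ hφ (t+u+s) (t+u+u) _ _
        (hpc_lem φ hφ (t+u) s _ x (inv_mem hyz) hx)
        (hpc_lem φ hφ (t+u) u _ z⁻¹ (inv_mem hyz) (inv_mem hz)))
  have b3m : pcomm (pcomm (pcomm y z) x)⁻¹ (pcomm y z)⁻¹ ∈ N :=
    key_lem φ hφ _ t u _ ht (by abel)
      (hpc_lem φ hφ (t+u+s) (t+u) _ _ (inv_mem h2m) (inv_mem hyz))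
  have b4m : pcomm (pcomm (pcomm y z) x) z ∈ N :=
    key_lem φ hφ _ u 0 _ hu (by abel) (hpc_lem φ hφ (t+u+s) u _ z h2m hz)
  have c1m : pcomm (pcomm (pcomm z x)⁻¹ x⁻¹) y ∈ N :=
    key_lem φ hφ _ s 0 _ hs (by abel)
      (hpc_lem φ hφ (u+s+s) t _ y
        (hpc_lem φ hφ (u+s) s _ x⁻¹ (inv_mem hzx) (inv_mem hx)) hy)
  have c2m : pcomm (pcomm (pcomm z x)⁻¹ y) (pcomm (pcomm z x)⁻¹ x⁻¹) ∈ N :=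
    key_lem φ hφ _ s (u+s) _ hs (by abel)
      (hpc_lem φ hφ (u+s+t) (u+s+s) _ _
        (hpc_lem φ hφ (u+s) t _ y (inv_mem hzx) hy)
        (hpc_lem φ hφ (u+s) s _ x⁻¹ (inv_mem hzx) (inv_mem hx)))
  have c3m : pcomm (pcomm (pcomm z x) y)⁻¹ (pcomm z x)⁻¹ ∈ N :=
    key_lem φ hφ _ u s _ hu (by abel)
      (hpc_lem φ hφ (u+s+t) (u+s) _ _ (inv_mem h3m) (inv_mem hzx))
  have c4m : pcomm (pcomm (pcomm z x) y) x ∈ N :=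
    key_lem φ hφ _ s 0 _ hs (by abel) (hpc_lem φ hφ (u+s+t) s _ x h3m hx)
  have p12m : pcomm (pcomm (pcomm x y) z) (pcomm (pcomm y z) x) ∈ N :=
    key_lem φ hφ _ s (t+u) _ hs (by abel)
      (hpc_lem φ hφ (s+t+u) (t+u+s) _ _ h1m h2m)
  have p13m : pcomm (pcomm (pcomm x y) z) (pcomm (pcomm z x) y) ∈ N :=
    key_lem φ hφ _ s (t+u) _ hs (by abel)
      (hpc_lem φ hφ (s+t+u) (u+s+t) _ _ h1m h3m)
  have p23m : pcomm (pcomm (pcomm y z) x) (pcomm (pcomm z x) y) ∈ N :=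
    key_lem φ hφ _ t (u+s) _ ht (by abel)
      (hpc_lem φ hφ (t+u+s) (u+s+t) _ _ h2m h3m)
  -- pass to the quotient
  rw [show (pcomm (pcomm x y) z * pcomm (pcomm y z) x * pcomm (pcomm z x) y ∈ N) ↔
      (p (pcomm (pcomm x y) z * pcomm (pcomm y z) x * pcomm (pcomm z x) y) = 1) from
    (QuotientGroup.eq_one_iff _).symm]
  rw [map_mul, map_mul, hp, hp, hp]
  simp only [hp]
  exact jacobi_aux (p x) (p y) (p z)
    (by simpa [hp, map_inv] using to_one _ a1m)
    (by simpa [hp, map_inv] using to_one _ a2m)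
    (by simpa [hp, map_inv] using to_one _ a3m)
    (by simpa [hp, map_inv] using to_one _ a4m)
    (by simpa [hp, map_inv] using to_one _ b1m)
    (by simpa [hp, map_inv] using to_one _ b2m)
    (by simpa [hp, map_inv] using to_one _ b3m)
    (by simpa [hp, map_inv] using to_one _ b4m)
    (by simpa [hp, map_inv] using to_one _ c1m)
    (by simpa [hp, map_inv] using to_one _ c2m)
    (by simpa [hp, map_inv] using to_one _ c3m)
    (by simpa [hp, map_inv] using to_one _ c4m)
    (by simpa [hp, map_inv] using to_one _ p12m)
    (by simpa [hp, map_inv] using to_one _ p13m)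
    (by simpa [hp, map_inv] using to_one _ p23m)
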